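/- For any two stochastic policies π and π̃, η(π̃) = η(π) + Σ_s ρ_π̃(s) Σ_a π̃(a|s) A_π(s,a), where ρ_π̃(s) = Σ_{t=0}^∞ γ^t P(s_t = s | π̃, ρ₀) is the unnormalized discounted state visitation frequency under π̃. -/

import Mathlib

open Finset

/-- State distribution at time `t` when executing policy `π`, starting from `ρ₀`. -/
noncomputable def stateDist {S A : Type} [Fintype S] [Fintype A]
    (P : S → A → S → ℝ) (π : S → A → ℝ) (ρ₀ : S → ℝ) : ℕ → S → ℝ
  | 0 => ρ₀
  | (t+1) => fun s' => ∑ s, ∑ a, stateDist P π ρ₀ t s * π s a * P s a s'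

/-- Unnormalized discounted state visitation frequency. -/
noncomputable def visit {S A : Type} [Fintype S] [Fintype A]
    (P : S → A → S → ℝ) (π : S → A → ℝ) (ρ₀ : S → ℝ) (γ : ℝ) (s : S) : ℝ :=
  ∑' t : ℕ, γ ^ t * stateDist P π ρ₀ t s

set_option maxHeartbeats 2000000 in
/-- η(π̃) = η(π) + Σ_s ρ_π̃(s) Σ_a π̃(a|s) A_π(s,a). -/
theorem stmt_1 {S A : Type} [Fintype S] [Fintype A]
    (P : S → A → S → ℝ) (r : S → ℝ) (ρ₀ : S → ℝ) (γ : ℝ)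
    (π πt : S → A → ℝ) (V Vt : S → ℝ) (Q Aπ : S → A → ℝ)
    (hγ0 : 0 < γ) (hγ1 : γ < 1)
    (hPpos : ∀ s a s', 0 ≤ P s a s') (hPsum : ∀ s a, ∑ s', P s a s' = 1)
    (hρpos : ∀ s, 0 ≤ ρ₀ s) (hρsum : ∑ s, ρ₀ s = 1)
    (hπpos : ∀ s a, 0 ≤ π s a) (hπsum : ∀ s, ∑ a, π s a = 1)
    (hπtpos : ∀ s a, 0 ≤ πt s a) (hπtsum : ∀ s, ∑ a, πt s a = 1)
    (hV : ∀ s, V s = ∑ a, π s a * (r s + γ * ∑ s', P s a s' * V s'))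
    (hVt : ∀ s, Vt s = ∑ a, πt s a * (r s + γ * ∑ s', P s a s' * Vt s'))
    (hQ : ∀ s a, Q s a = r s + γ * ∑ s', P s a s' * V s')
    (hA : ∀ s a, Aπ s a = Q s a - V s) :
    ∑ s, ρ₀ s * Vt s =
      (∑ s, ρ₀ s * V s) +
        ∑ s, visit P πt ρ₀ γ s * ∑ a, πt s a * Aπ s a := by
  classical
  set D := stateDist P πt ρ₀ with hDdef
  have hγt : ∀ t : ℕ, (0:ℝ) ≤ γ ^ t := fun t => pow_nonneg hγ0.le t
  have hDsucc : ∀ t s', D (t+1) s' = ∑ s, ∑ a, D t s * πt s a * P s a s' := fun t s' => rfl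
  have hD0 : ∀ s, D 0 s = ρ₀ s := fun s => rfl
  have hDpos : ∀ t s, 0 ≤ D t s := by
    intro t
    induction t with
    | zero => exact hρpos
    | succ t ih =>
      intro s'
      rw [hDsucc]
      exact Finset.sum_nonneg fun s _ => Finset.sum_nonneg fun a _ =>
        mul_nonneg (mul_nonneg (ih s) (hπtpos s a)) (hPpos s a s')
  have hDsum : ∀ t, ∑ s, D t s = 1 := by
    intro t
    induction t with
    | zero => exact hρsum
    | succ t ih =>
      calc ∑ s', D (t+1) s' = ∑ s', ∑ s, ∑ a, D t s * πt s a * P s a s' := by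
            exact Finset.sum_congr rfl fun s' _ => hDsucc t s'
        _ = ∑ s, ∑ s', ∑ a, D t s * πt s a * P s a s' := Finset.sum_comm
        _ = ∑ s, D t s := by
            refine Finset.sum_congr rfl fun s _ => ?_
            rw [Finset.sum_comm]
            calc ∑ a, ∑ s', D t s * πt s a * P s a s'
                = ∑ a, D t s * πt s a := by
                  refine Finset.sum_congr rfl fun a _ => ?_
                  rw [← Finset.mul_sum, hPsum s a, mul_one]
              _ = D t s := by rw [← Finset.mul_sum, hπtsum s, mul_one]
        _ = 1 := ih
  have hDle1 : ∀ t s, D t s ≤ 1 := by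
    intro t s
    calc D t s ≤ ∑ s', D t s' :=
          Finset.single_le_sum (fun s' _ => hDpos t s') (Finset.mem_univ s)
      _ = 1 := hDsum t
  set W : S → ℝ := fun s => Vt s - V s with hWdef
  set f : S → ℝ := fun s => ∑ a, πt s a * Aπ s a with hfdef
  set h : ℕ → ℝ := fun t => ∑ s, D t s * W s with hhdef
  set C : ℝ := ∑ s, |W s| with hCdef
  have hhbd : ∀ t, |h t| ≤ C := by
    intro t
    calc |h t| ≤ ∑ s, |D t s * W s| := Finset.abs_sum_le_sum_abs _ _
      _ ≤ ∑ s, |W s| := by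
          refine Finset.sum_le_sum fun s _ => ?_
          rw [abs_mul, abs_of_nonneg (hDpos t s)]
          exact mul_le_of_le_one_left (abs_nonneg _) (hDle1 t s)
  have hgeo : Summable (fun t : ℕ => γ ^ t) := summable_geometric_of_lt_one hγ0.le hγ1
  have hsumD : ∀ s, Summable (fun t : ℕ => γ ^ t * D t s) := by
    intro s
    refine Summable.of_nonneg_of_le (fun t => mul_nonneg (hγt t) (hDpos t s))
      (fun t => ?_) hgeo
    calc γ ^ t * D t s ≤ γ ^ t * 1 := mul_le_mul_of_nonneg_left (hDle1 t s) (hγt t)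
      _ = γ ^ t := mul_one _
  have hsumh : Summable (fun t : ℕ => γ ^ t * h t) := by
    refine Summable.of_norm_bounded (g := fun t => C * γ ^ t) (hgeo.mul_left C) fun t => ?_
    rw [Real.norm_eq_abs, abs_mul, abs_of_nonneg (hγt t)]
    calc γ ^ t * |h t| ≤ γ ^ t * C := mul_le_mul_of_nonneg_left (hhbd t) (hγt t)
      _ = C * γ ^ t := mul_comm _ _
  have key : ∀ s, f s = W s - γ * ∑ a, πt s a * ∑ s', P s a s' * W s' := by
    intro s
    have expand : ∀ a : A, πt s a * Aπ s a =
        πt s a * (r s + γ * ∑ s', P s a s' * Vt s')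
          - γ * (πt s a * ∑ s', P s a s' * W s') - πt s a * V s := by
      intro a
      have hsplit : ∑ s', P s a s' * W s'
          = (∑ s', P s a s' * Vt s') - ∑ s', P s a s' * V s' := by
        rw [← Finset.sum_sub_distrib]
        refine Finset.sum_congr rfl fun s' _ => ?_
        simp only [hWdef]; ring
      rw [hA, hQ, hsplit]; ring
    calc f s = ∑ a, (πt s a * (r s + γ * ∑ s', P s a s' * Vt s')
          - γ * (πt s a * ∑ s', P s a s' * W s') - πt s a * V s) :=
          Finset.sum_congr rfl fun a _ => expand a
      _ = (∑ a, πt s a * (r s + γ * ∑ s', P s a s' * Vt s'))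
          - γ * ∑ a, πt s a * ∑ s', P s a s' * W s'
          - (∑ a, πt s a) * V s := by
            rw [Finset.sum_sub_distrib, Finset.sum_sub_distrib, ← Finset.mul_sum,
              Finset.sum_mul]
      _ = W s - γ * ∑ a, πt s a * ∑ s', P s a s' * W s' := by
            rw [← hVt s, hπtsum s]; simp only [hWdef]; ring
  have hstep : ∀ t, (∑ s, D t s * f s) = h t - γ * h (t + 1) := by
    intro t
    have hB : ∑ s, ∑ a, ∑ s', D t s * πt s a * P s a s' * W s' = h (t+1) := by
      have hterm : ∀ s', D (t+1) s' * W s'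
          = ∑ s, ∑ a, D t s * πt s a * P s a s' * W s' := by
        intro s'
        rw [hDsucc, Finset.sum_mul]
        exact Finset.sum_congr rfl fun s _ => Finset.sum_mul _ _ _
      calc ∑ s, ∑ a, ∑ s', D t s * πt s a * P s a s' * W s'
          = ∑ s, ∑ s', ∑ a, D t s * πt s a * P s a s' * W s' :=
            Finset.sum_congr rfl fun s _ => Finset.sum_comm
        _ = ∑ s', ∑ s, ∑ a, D t s * πt s a * P s a s' * W s' := Finset.sum_comm
        _ = ∑ s', D (t+1) s' * W s' :=
            Finset.sum_congr rfl fun s' _ => (hterm s').symm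
        _ = h (t+1) := rfl
    calc ∑ s, D t s * f s
        = ∑ s, (D t s * W s - γ * ∑ a, ∑ s', D t s * πt s a * P s a s' * W s') := by
          refine Finset.sum_congr rfl fun s _ => ?_
          rw [key s, mul_sub]
          congr 1
          simp only [Finset.mul_sum]
          refine Finset.sum_congr rfl fun a _ => ?_
          refine Finset.sum_congr rfl fun s' _ => ?_
          ring
      _ = (∑ s, D t s * W s) - γ * ∑ s, ∑ a, ∑ s', D t s * πt s a * P s a s' * W s' := by
          rw [Finset.sum_sub_distrib, ← Finset.mul_sum]
      _ = h t - γ * h (t+1) := by rw [hB]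
  have hu0 : Filter.Tendsto (fun n : ℕ => γ ^ n * h n) Filter.atTop (nhds 0) := by
    refine squeeze_zero_norm (a := fun n => C * γ ^ n) (fun n => ?_) ?_
    · rw [Real.norm_eq_abs, abs_mul, abs_of_nonneg (hγt n)]
      calc γ ^ n * |h n| ≤ γ ^ n * C := mul_le_mul_of_nonneg_left (hhbd n) (hγt n)
        _ = C * γ ^ n := mul_comm _ _
    · have := (tendsto_pow_atTop_nhds_zero_of_lt_one hγ0.le hγ1).const_mul C
      simpa using this
  have hsumh1 : Summable (fun t : ℕ => γ ^ (t+1) * h (t+1)) :=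
    (summable_nat_add_iff 1).mpr hsumh
  have htele : HasSum (fun t => γ ^ t * h t - γ ^ (t+1) * h (t+1)) (h 0) := by
    have hs : Summable (fun t => γ ^ t * h t - γ ^ (t+1) * h (t+1)) := hsumh.sub hsumh1
    rw [hs.hasSum_iff_tendsto_nat]
    have hps : ∀ n, ∑ t ∈ Finset.range n, (γ ^ t * h t - γ ^ (t+1) * h (t+1))
        = γ ^ 0 * h 0 - γ ^ n * h n :=
      fun n => Finset.sum_range_sub' (fun t => γ ^ t * h t) n
    simp only [hps, pow_zero, one_mul]
    simpa using Filter.Tendsto.sub (tendsto_const_nhds (x := h 0)) hu0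
  have hFt : ∀ t, ∑ s, γ ^ t * D t s * f s = γ ^ t * h t - γ ^ (t+1) * h (t+1) := by
    intro t
    have h1 : ∑ s, γ ^ t * D t s * f s = γ ^ t * ∑ s, D t s * f s := by
      rw [Finset.mul_sum]
      exact Finset.sum_congr rfl fun s _ => by ring
    rw [h1, hstep t]; ring
  have hmain : ∑ s, visit P πt ρ₀ γ s * f s = h 0 := by
    have h1 : ∀ s, visit P πt ρ₀ γ s * f s = ∑' t, γ ^ t * D t s * f s := by
      intro s
      rw [show visit P πt ρ₀ γ s = ∑' t, γ ^ t * D t s from rfl, ← tsum_mul_right]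
    calc ∑ s, visit P πt ρ₀ γ s * f s
        = ∑ s, ∑' t, γ ^ t * D t s * f s := Finset.sum_congr rfl fun s _ => h1 s
      _ = ∑' t, ∑ s, γ ^ t * D t s * f s :=
          (Summable.tsum_finsetSum (f := fun (s : S) (t : ℕ) => γ ^ t * D t s * f s)
            (fun s _ => (hsumD s).mul_right (f s))).symm
      _ = ∑' t, (γ ^ t * h t - γ ^ (t+1) * h (t+1)) := tsum_congr hFt
      _ = h 0 := htele.tsum_eq
  have h0eq : h 0 = (∑ s, ρ₀ s * Vt s) - ∑ s, ρ₀ s * V s := by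
    rw [← Finset.sum_sub_distrib]
    refine Finset.sum_congr rfl fun s _ => ?_
    show D 0 s * W s = _
    rw [hD0]; simp only [hWdef]; ring
  rw [hmain, h0eq]; ring
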